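/- In the setting of an abelian ℤ-grading of a simple Lie algebra, for w ∈ W⁰, a root γ ∈ N(w) is a maximal element of N(w) (in the induced order on Δ(1)) if and only if w(γ) ∈ −Π; equivalently, max(N(w)) = −w⁻¹(Π) ∩ Δ(1). -/

import Mathlib

variable {V : Type*} [NormedAddCommGroup V] [InnerProductSpace ℝ V]

/-- Data of a reduced crystallographic root system `Δ` in a Euclidean space, together with a
choice of positive system `Δ⁺` and the corresponding simple roots `Π`. -/
structure RootSystemData (V : Type*) [NormedAddCommGroup V] [InnerProductSpace ℝ V] where
  roots : Finset V
  pos : Finset V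
  simples : Finset V
  zero_not_mem : (0 : V) ∉ roots
  neg_mem : ∀ γ ∈ roots, -γ ∈ roots
  reduced : ∀ γ ∈ roots, ∀ c : ℝ, c • γ ∈ roots → c = 1 ∨ c = -1
  crystallographic : ∀ γ ∈ roots, ∀ δ ∈ roots,
    ∃ n : ℤ, 2 * (inner ℝ γ δ : ℝ) / (inner ℝ δ δ : ℝ) = (n : ℝ)
  reflect_mem : ∀ γ ∈ roots, ∀ δ ∈ roots,
    γ - (2 * (inner ℝ γ δ : ℝ) / (inner ℝ δ δ : ℝ)) • δ ∈ roots
  pos_subset : pos ⊆ roots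
  pos_or_neg : ∀ γ ∈ roots, γ ∈ pos ∨ -γ ∈ pos
  pos_neg_disjoint : ∀ γ ∈ pos, -γ ∉ pos
  simples_subset : simples ⊆ pos
  simples_indep : LinearIndependent ℝ (fun α : {x // x ∈ simples} => (α : V))
  pos_combo : ∀ γ ∈ pos, ∃ c : V → ℕ, γ = ∑ α ∈ simples, (c α : ℝ) • α

/-- Irreducibility: the roots admit no partition into two nonempty mutually orthogonal parts. -/
def RootSystemData.Irreducible (R : RootSystemData V) : Prop :=
  ∀ A B : Set V, A ∪ B = ↑R.roots → Disjoint A B →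
    (∀ a ∈ A, ∀ b ∈ B, (inner ℝ a b : ℝ) = 0) → A = ∅ ∨ B = ∅

/-- The reflection in the hyperplane orthogonal to `δ`. -/
noncomputable def reflAt (δ : V) : Function.End V :=
  fun x => x - (2 * (inner ℝ x δ : ℝ) / (inner ℝ δ δ : ℝ)) • δ

/-- The Weyl group, generated by the reflections in the roots (each reflection is an
involution, so the closure as a monoid of endomorphisms coincides with the generated group). -/
def weylGroup (R : RootSystemData V) : Submonoid (Function.End V) :=
  Submonoid.closure {f | ∃ δ ∈ R.roots, f = reflAt δ}

/-- The inversion set `N(w) = {γ ∈ Δ⁺ : w(γ) < 0}`. -/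
def invSet (R : RootSystemData V) (w : Function.End V) : Set V :=
  {γ | γ ∈ R.pos ∧ -(w γ) ∈ R.pos}

/-- The pairing `(γ, θ∨) = 2(γ,θ)/(θ,θ)`. -/
noncomputable def copair (θ γ : V) : ℝ := 2 * (inner ℝ γ θ : ℝ) / (inner ℝ θ θ : ℝ)

/-- `μ ≤ γ` iff `γ − μ` is a nonnegative integer combination of the simple roots lying in
the subset `Z`. -/
def rootLEon (simples : Finset V) (Z : Set V) (μ γ : V) : Prop :=
  ∃ c : V → ℕ, (∀ α, α ∉ Z → c α = 0) ∧ γ = μ + ∑ α ∈ simples, (c α : ℝ) • α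

/-- The weights of `g(1)`: roots with `γ(h̃) = 1` for the defining functional `ℓ`. -/
def gradeOne (R : RootSystemData V) (ℓ : V →ₗ[ℝ] ℝ) : Set V :=
  {γ | γ ∈ R.roots ∧ ℓ γ = 1}

/-- The minimal-length coset representatives
`W⁰ = {w ∈ W : w(α) ∈ Δ⁺ for all α ∈ Δ(0)⁺}`. -/
def minLengthReps (R : RootSystemData V) (ℓ : V →ₗ[ℝ] ℝ) : Set (Function.End V) :=
  {w | w ∈ weylGroup R ∧ ∀ α, α ∈ R.pos → ℓ α = 0 → w α ∈ R.pos}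

/-- The upper ideal `I_w = Δ(1) \ N(w)` attached to `w ∈ W⁰`. -/
def idealOf (R : RootSystemData V) (ℓ : V →ₗ[ℝ] ℝ) (w : Function.End V) : Set V :=
  gradeOne R ℓ \ invSet R w

/-- The minimal elements of `S` with respect to the relation `r`. -/
def minimalsRel (r : V → V → Prop) (S : Set V) : Set V :=
  {x | x ∈ S ∧ ∀ y ∈ S, r y x → y = x}

/-- The maximal elements of `S` with respect to the relation `r`. -/
def maximalsRel (r : V → V → Prop) (S : Set V) : Set V :=
  {x | x ∈ S ∧ ∀ y ∈ S, r x y → y = x}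

-- height functional
lemma exists_height (R : RootSystemData V) :
    ∃ h : V →ₗ[ℝ] ℝ, (∀ α ∈ R.simples, h α = 1) ∧ (∀ γ ∈ R.pos, 1 ≤ h γ) := by
  classical
  have hsi : LinearIndependent ℝ ((↑) : (↑R.simples : Set V) → V) := R.simples_indep
  set b := Module.Basis.extend hsi with hb
  set h : V →ₗ[ℝ] ℝ := b.constr ℝ (fun i => if h : (i : V) ∈ R.simples then (1:ℝ) else 0) with hh
  have h1 : ∀ α ∈ R.simples, h α = 1 := by
    intro α hα
    have hα' : α ∈ (↑R.simples : Set V) := hα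
    have hm : α ∈ LinearIndepOn.extend (show LinearIndepOn ℝ id (↑R.simples : Set V) from hsi) (Set.subset_univ _) :=
      LinearIndepOn.subset_extend (show LinearIndepOn ℝ id (↑R.simples : Set V) from hsi) _ hα'
    have hba : (b ⟨α, hm⟩ : V) = α := Module.Basis.extend_apply_self hsi ⟨α, hm⟩
    calc h α = h (b ⟨α, hm⟩) := by rw [hba]
    _ = 1 := by rw [hh, Module.Basis.constr_basis]; exact dif_pos hα
  refine ⟨h, h1, ?_⟩
  intro γ hγ
  obtain ⟨c, hc⟩ := R.pos_combo γ hγ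
  have hhγ : h γ = ((∑ α ∈ R.simples, c α : ℕ) : ℝ) := by
    rw [hc, map_sum, Nat.cast_sum]
    exact Finset.sum_congr rfl fun α hα => by rw [map_smul, h1 α hα, smul_eq_mul, mul_one]
  have hne : (∑ α ∈ R.simples, c α) ≠ 0 := by
    intro h0
    have : ∀ α ∈ R.simples, c α = 0 := by
      intro α hα; exact (Finset.sum_eq_zero_iff.mp h0) α hα
    have : γ = 0 := by
      rw [hc]; exact Finset.sum_eq_zero fun α hα => by rw [this α hα]; simp
    exact R.zero_not_mem (this ▸ R.pos_subset hγ)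
  rw [hhγ]
  exact_mod_cast Nat.one_le_iff_ne_zero.2 hne

lemma reflAt_linear (δ : V) : IsLinearMap ℝ (reflAt δ) := by
  constructor
  · intro x y
    simp only [reflAt, inner_add_left]
    match_scalars <;> ring
  · intro c x
    simp only [reflAt, real_inner_smul_left]
    match_scalars <;> ring

lemma reflAt_reflAt (δ : V) (hδ : δ ≠ 0) (x : V) : reflAt δ (reflAt δ x) = x := by
  have hd : (inner ℝ δ δ : ℝ) ≠ 0 := inner_self_ne_zero.2 hδ
  simp only [reflAt, inner_sub_left, real_inner_smul_left]
  match_scalars <;> field_simp <;> ring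

lemma weyl_props (R : RootSystemData V) {w : Function.End V} (hw : w ∈ weylGroup R) :
    IsLinearMap ℝ w ∧ ∃ w', w' ∈ weylGroup R ∧ IsLinearMap ℝ w' ∧
      (∀ v, w (w' v) = v) ∧ (∀ v, w' (w v) = v) ∧ (∀ γ ∈ R.roots, w' γ ∈ R.roots) := by
  induction hw using Submonoid.closure_induction with
  | mem f hf =>
    obtain ⟨δ, hδ, rfl⟩ := hf
    have hδ0 : δ ≠ 0 := fun h => R.zero_not_mem (h ▸ hδ)
    refine ⟨reflAt_linear δ, reflAt δ, Submonoid.subset_closure ⟨δ, hδ, rfl⟩,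
      reflAt_linear δ, reflAt_reflAt δ hδ0, reflAt_reflAt δ hδ0, ?_⟩
    intro γ hγ
    exact R.reflect_mem γ hγ δ hδ
  | one =>
    exact ⟨⟨fun _ _ => rfl, fun _ _ => rfl⟩, 1, one_mem _, ⟨fun _ _ => rfl, fun _ _ => rfl⟩,
      fun _ => rfl, fun _ => rfl, fun γ hγ => hγ⟩
  | mul x y hx hy ihx ihy =>
    obtain ⟨hxl, x', hx'w, hx'l, hxx', hx'x, hx'r⟩ := ihx
    obtain ⟨hyl, y', hy'w, hy'l, hyy', hy'y, hy'r⟩ := ihy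
    refine ⟨⟨fun a b => ?_, fun c a => ?_⟩, y' * x', mul_mem hy'w hx'w,
      ⟨fun a b => ?_, fun c a => ?_⟩, fun v => ?_, fun v => ?_, fun γ hγ => ?_⟩
    · show x (y (a + b)) = x (y a) + x (y b); rw [hyl.map_add, hxl.map_add]
    · show x (y (c • a)) = c • x (y a); rw [hyl.map_smul, hxl.map_smul]
    · show y' (x' (a + b)) = y' (x' a) + y' (x' b); rw [hx'l.map_add, hy'l.map_add]
    · show y' (x' (c • a)) = c • y' (x' a); rw [hx'l.map_smul, hy'l.map_smul]
    · show x (y (y' (x' v))) = v; rw [hyy', hxx']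
    · show y' (x' (x (y v))) = v; rw [hx'x, hy'y]
    · show y' (x' γ) ∈ R.roots; exact hy'r _ (hx'r γ hγ)

lemma root_sub (R : RootSystemData V) {μ β : V} (hμ : μ ∈ R.roots) (hβ : β ∈ R.roots)
    (hne : μ ≠ β) (hip : 0 < (inner ℝ μ β : ℝ)) : μ - β ∈ R.roots := by
  have hμ0 : μ ≠ 0 := fun h => R.zero_not_mem (h ▸ hμ)
  have hβ0 : β ≠ 0 := fun h => R.zero_not_mem (h ▸ hβ)
  have hμμ : (0:ℝ) < inner ℝ μ μ := lt_of_le_of_ne real_inner_self_nonneg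
    (Ne.symm (inner_self_ne_zero.2 hμ0))
  have hββ : (0:ℝ) < inner ℝ β β := lt_of_le_of_ne real_inner_self_nonneg
    (Ne.symm (inner_self_ne_zero.2 hβ0))
  obtain ⟨n₁, hn₁⟩ := R.crystallographic μ hμ β hβ
  obtain ⟨n₂, hn₂⟩ := R.crystallographic β hβ μ hμ
  have h1 : (0:ℝ) < n₁ := by rw [← hn₁]; positivity
  have h2 : (0:ℝ) < n₂ := by
    rw [← hn₂]
    have : (0:ℝ) < inner ℝ β μ := by rwa [real_inner_comm]
    positivity
  -- strict Cauchy–Schwarz, since μ, β are not parallel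
  have hcs : (inner ℝ μ β : ℝ) < ‖μ‖ * ‖β‖ := by
    rw [inner_lt_norm_mul_iff_real]
    intro heq
    have hμn : ‖μ‖ ≠ 0 := norm_ne_zero_iff.2 hμ0
    have hβμ : β = (‖β‖ / ‖μ‖) • μ := by
      have h3 : β = (‖μ‖)⁻¹ • (‖β‖ • μ) := by
        rw [heq, smul_smul, inv_mul_cancel₀ hμn, one_smul]
      rw [div_eq_inv_mul, mul_smul]; exact h3
    rcases R.reduced μ hμ (‖β‖ / ‖μ‖) (hβμ ▸ hβ) with h | h
    · exact hne (by rw [h, one_smul] at hβμ; exact hβμ.symm)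
    · have : (0:ℝ) ≤ ‖β‖ / ‖μ‖ := by positivity
      rw [h] at this; linarith
  have hnorm : (inner ℝ μ β : ℝ) * inner ℝ μ β < (inner ℝ μ μ : ℝ) * inner ℝ β β := by
    have ha : (inner ℝ μ μ : ℝ) = ‖μ‖ * ‖μ‖ := real_inner_self_eq_norm_mul_norm μ
    have hb : (inner ℝ β β : ℝ) = ‖β‖ * ‖β‖ := real_inner_self_eq_norm_mul_norm β
    calc (inner ℝ μ β : ℝ) * inner ℝ μ β < (‖μ‖ * ‖β‖) * (‖μ‖ * ‖β‖) :=
          mul_self_lt_mul_self (le_of_lt hip) hcs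
    _ = (inner ℝ μ μ : ℝ) * inner ℝ β β := by rw [ha, hb]; ring
  have hsym : (inner ℝ β μ : ℝ) = inner ℝ μ β := real_inner_comm μ β
  have hprod : (n₁ : ℝ) * n₂ < 4 := by
    rw [← hn₁, ← hn₂, div_mul_div_comm, div_lt_iff₀ (by positivity)]
    nlinarith [hnorm, hsym]
  have hn₁1 : 1 ≤ n₁ := by exact_mod_cast h1
  have hn₂1 : 1 ≤ n₂ := by exact_mod_cast h2
  have hp : n₁ * n₂ < 4 := by exact_mod_cast hprod
  have : n₁ = 1 ∨ n₂ = 1 := by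
    by_contra hcon
    push_neg at hcon
    have : 2 ≤ n₁ := lt_of_le_of_ne hn₁1 (Ne.symm hcon.1)
    have : 2 ≤ n₂ := lt_of_le_of_ne hn₂1 (Ne.symm hcon.2)
    nlinarith
  rcases this with h | h
  · have := R.reflect_mem μ hμ β hβ
    rwa [hn₁, h, Int.cast_one, one_smul] at this
  · have := R.reflect_mem β hβ μ hμ
    rw [hn₂, h, Int.cast_one, one_smul] at this
    have := R.neg_mem _ this
    rwa [neg_sub] at this

lemma ell_nonneg_of_pos (R : RootSystemData V) (ℓ : V →ₗ[ℝ] ℝ)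
    (hsimp : ∀ α ∈ R.simples, 0 ≤ ℓ α) {γ : V} (hγ : γ ∈ R.pos) : 0 ≤ ℓ γ := by
  obtain ⟨c, hc⟩ := R.pos_combo γ hγ
  rw [hc, map_sum]
  exact Finset.sum_nonneg fun α hα => by
    rw [map_smul, smul_eq_mul]; exact mul_nonneg (Nat.cast_nonneg _) (hsimp α hα)

lemma pos_of_grade_one (R : RootSystemData V) (ℓ : V →ₗ[ℝ] ℝ)
    (hsimp : ∀ α ∈ R.simples, 0 ≤ ℓ α) {γ : V} (hγ : γ ∈ R.roots) (h1 : ℓ γ = 1) :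
    γ ∈ R.pos := by
  rcases R.pos_or_neg γ hγ with h | h
  · exact h
  · have := ell_nonneg_of_pos R ℓ hsimp h
    rw [map_neg, h1] at this; linarith

lemma invSet_subset_gradeOne (R : RootSystemData V) (ℓ : V →ₗ[ℝ] ℝ)
    (hab : ∀ γ ∈ R.roots, ℓ γ = -1 ∨ ℓ γ = 0 ∨ ℓ γ = 1)
    (hsimp : ∀ α ∈ R.simples, 0 ≤ ℓ α)
    {w : Function.End V} (hw : w ∈ minLengthReps R ℓ) : invSet R w ⊆ gradeOne R ℓ := by
  rintro γ ⟨hp, hn⟩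
  have hr : γ ∈ R.roots := R.pos_subset hp
  refine ⟨hr, ?_⟩
  have h0 := ell_nonneg_of_pos R ℓ hsimp hp
  rcases hab γ hr with h | h | h
  · linarith
  · exact absurd hn (R.pos_neg_disjoint _ (hw.2 γ hp h))
  · exact h

lemma exists_simple_inner_pos (R : RootSystemData V) {μ : V} (hμ : μ ∈ R.pos) :
    ∃ β ∈ R.simples, 0 < (inner ℝ μ β : ℝ) := by
  by_contra hcon
  push_neg at hcon
  have hμ0 : μ ≠ 0 := fun h => R.zero_not_mem (h ▸ R.pos_subset hμ)
  have hμμ : (0:ℝ) < inner ℝ μ μ := lt_of_le_of_ne real_inner_self_nonneg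
    (Ne.symm (inner_self_ne_zero.2 hμ0))
  obtain ⟨c, hc⟩ := R.pos_combo μ hμ
  have : (inner ℝ μ μ : ℝ) = ∑ α ∈ R.simples, (c α : ℝ) * inner ℝ μ α := by
    conv_lhs => rw [hc]
    rw [inner_sum]
    exact Finset.sum_congr rfl fun α hα => by rw [real_inner_smul_right, ← hc]
  have hle : (inner ℝ μ μ : ℝ) ≤ 0 := by
    rw [this]
    exact Finset.sum_nonpos fun α hα =>
      mul_nonpos_of_nonneg_of_nonpos (Nat.cast_nonneg _) (hcon α hα)
  linarith

lemma rootLEon_of_pos_zero (R : RootSystemData V) (ℓ : V →ₗ[ℝ] ℝ)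
    (hsimp : ∀ α ∈ R.simples, 0 ≤ ℓ α) {a : V} (ha : a ∈ R.pos) (h0 : ℓ a = 0) (γ : V) :
    rootLEon R.simples {α | ℓ α = 0} γ (γ + a) := by
  classical
  obtain ⟨c, hc⟩ := R.pos_combo a ha
  refine ⟨fun α => if ℓ α = 0 then c α else 0, fun α hα => if_neg hα, ?_⟩
  have hzero : ∀ α ∈ R.simples, (c α : ℝ) * ℓ α = 0 := by
    have hsum : ∑ α ∈ R.simples, (c α : ℝ) * ℓ α = 0 := by
      rw [← h0]; conv_rhs => rw [hc]
      rw [map_sum]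
      exact (Finset.sum_congr rfl fun α hα => by rw [map_smul, smul_eq_mul]).symm
    exact fun α hα => (Finset.sum_eq_zero_iff_of_nonneg fun α hα =>
      mul_nonneg (Nat.cast_nonneg _) (hsimp α hα)).mp hsum α hα
  congr 1
  rw [hc]
  refine Finset.sum_congr rfl fun α hα => ?_
  by_cases h : ℓ α = 0
  · simp [h]
  · have := hzero α hα
    have hcα : (c α : ℝ) = 0 := by
      rcases mul_eq_zero.mp this with h' | h'
      · exact h'
      · exact absurd h' h
    simp [h, hcα]

/-- Abelian case: for `w ∈ W⁰`, a root `γ ∈ N(w)` is a maximal element of `N(w)` (in the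
order induced from `Δ(1)`) iff `w(γ) ∈ −Π`; equivalently `max(N(w)) = −w⁻¹(Π) ∩ Δ(1)`. -/
theorem abelian_max_of_inversion_set (R : RootSystemData V) (ℓ : V →ₗ[ℝ] ℝ)
    (hab : ∀ γ ∈ R.roots, ℓ γ = -1 ∨ ℓ γ = 0 ∨ ℓ γ = 1)
    (hsimp : ∀ α ∈ R.simples, 0 ≤ ℓ α)
    (w : Function.End V) (hw : w ∈ minLengthReps R ℓ) :
    (∀ γ ∈ invSet R w,
        (γ ∈ maximalsRel (rootLEon R.simples {α | ℓ α = 0}) (invSet R w) ↔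
          -(w γ) ∈ R.simples)) ∧
    maximalsRel (rootLEon R.simples {α | ℓ α = 0}) (invSet R w)
      = {γ : V | -(w γ) ∈ R.simples} ∩ gradeOne R ℓ := by
  classical
  obtain ⟨h, hs1, hp1⟩ := exists_height R
  obtain ⟨hwlin, w', hw'W, hw'lin, hww', hw'w, hw'root⟩ := weyl_props R hw.1
  have main : ∀ γ ∈ invSet R w,
      (γ ∈ maximalsRel (rootLEon R.simples {α | ℓ α = 0}) (invSet R w) ↔
        -(w γ) ∈ R.simples) := by
    intro γ hγ
    obtain ⟨hγpos, hγneg⟩ := hγ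
    constructor
    · -- maximal → w γ ∈ -Π
      rintro ⟨-, hmax⟩
      by_contra hns
      set μ := -(w γ) with hμdef
      obtain ⟨β, hβs, hβip⟩ := exists_simple_inner_pos R hγneg
      have hβpos : β ∈ R.pos := R.simples_subset hβs
      have hμroot : μ ∈ R.roots := R.pos_subset hγneg
      have hβroot : β ∈ R.roots := R.pos_subset hβpos
      have hμβne : μ ≠ β := fun hh => hns (hh ▸ hβs)
      have hνroot : μ - β ∈ R.roots := root_sub R hμroot hβroot hμβne hβip
      set ν := μ - β with hνdef
      have hνpos : ν ∈ R.pos := by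
        rcases R.pos_or_neg ν hνroot with hh | hh
        · exact hh
        · exfalso
          have hβeq : β = μ + -(μ - β) := by abel
          have hhβ : h β = h μ + h (-(μ - β)) := by rw [← map_add]; exact congrArg h hβeq
          have := hs1 β hβs
          have h1 := hp1 μ hγneg
          have h2 := hp1 _ hh
          rw [hνdef] at h2
          linarith [hhβ ▸ this]
      set a := w' β with hadef
      set b := w' ν with hbdef
      have haroot : a ∈ R.roots := hw'root β hβroot
      have hbroot : b ∈ R.roots := hw'root ν hνroot
      have hwa : w a = β := hww' β
      have hwb : w b = ν := hww' ν
      have hwγ : w γ = -β - ν := by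
        have h1 : w γ = -μ := by rw [hμdef, neg_neg]
        rw [h1, hνdef]; abel
      have hγab : γ = -a - b := by
        calc γ = w' (w γ) := (hw'w γ).symm
        _ = w' (-β - ν) := by rw [hwγ]
        _ = -a - b := by
            rw [hadef, hbdef]
            rw [show w' (-β - ν) = (IsLinearMap.mk' w' hw'lin) (-β - ν) from rfl,
              map_sub, map_neg]
            rfl
      have hℓγ : ℓ γ = 1 := (invSet_subset_gradeOne R ℓ hab hsimp hw ⟨hγpos, hγneg⟩).2
      have hℓab : ℓ a + ℓ b = -1 := by
        have : ℓ γ = -(ℓ a) - ℓ b := by rw [hγab, map_sub, map_neg]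
        linarith
      have hcase : (ℓ a = 0 ∧ ℓ b = -1) ∨ (ℓ a = -1 ∧ ℓ b = 0) := by
        rcases hab a haroot with h1 | h1 | h1 <;> rcases hab b hbroot with h2 | h2 | h2 <;>
          first
            | (left; exact ⟨h1, h2⟩)
            | (right; exact ⟨h1, h2⟩)
            | (exfalso; linarith)
      have hwneg : ∀ x : V, w (-x) = -(w x) := fun x => by
        rw [show w (-x) = (IsLinearMap.mk' w hwlin) (-x) from rfl, map_neg]; rfl
      rcases hcase with ⟨ha0, hbm⟩ | ⟨ham, hb0⟩
      · -- ℓ a = 0, use γ' = γ + a = -b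
        have hapos : a ∈ R.pos := by
          rcases R.pos_or_neg a haroot with hh | hh
          · exact hh
          · exfalso
            have hna : ℓ (-a) = 0 := by rw [map_neg, ha0, neg_zero]
            have hcontra := hw.2 (-a) hh hna
            rw [hwneg a, hwa] at hcontra
            exact R.pos_neg_disjoint β hβpos hcontra
        have hle := rootLEon_of_pos_zero R ℓ hsimp hapos ha0 γ
        have hγ'b : γ + a = -b := by rw [hγab]; abel
        have hγ'mem : γ + a ∈ invSet R w := by
          rw [hγ'b]
          constructor
          · refine pos_of_grade_one R ℓ hsimp (R.neg_mem b hbroot) ?_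
            rw [map_neg, hbm]; norm_num
          · rw [hwneg b, hwb, neg_neg]; exact hνpos
        have := hmax (γ + a) hγ'mem hle
        have ha0' : a = 0 := by
          have := add_eq_left.mp this
          exact this
        exact R.zero_not_mem (ha0' ▸ haroot)
      · -- ℓ a = -1, use γ' = γ + b = -a
        have hbpos : b ∈ R.pos := by
          rcases R.pos_or_neg b hbroot with hh | hh
          · exact hh
          · exfalso
            have hnb : ℓ (-b) = 0 := by rw [map_neg, hb0, neg_zero]
            have hcontra := hw.2 (-b) hh hnb
            rw [hwneg b, hwb] at hcontra
            exact R.pos_neg_disjoint ν hνpos hcontra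
        have hle := rootLEon_of_pos_zero R ℓ hsimp hbpos hb0 γ
        have hγ'a : γ + b = -a := by rw [hγab]; abel
        have hγ'mem : γ + b ∈ invSet R w := by
          rw [hγ'a]
          constructor
          · refine pos_of_grade_one R ℓ hsimp (R.neg_mem a haroot) ?_
            rw [map_neg, ham]; norm_num
          · rw [hwneg a, hwa, neg_neg]; exact hβpos
        have := hmax (γ + b) hγ'mem hle
        have hb0' : b = 0 := add_eq_left.mp this
        exact R.zero_not_mem (hb0' ▸ hbroot)
    · -- w γ ∈ -Π → maximal
      intro hsimple
      refine ⟨⟨hγpos, hγneg⟩, ?_⟩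
      rintro γ' ⟨hγ'pos, hγ'neg⟩ ⟨c, hcsupp, hcγ'⟩
      have hwsum : w γ' = w γ + ∑ α ∈ R.simples, (c α : ℝ) • w α := by
        rw [show w γ' = (IsLinearMap.mk' w hwlin) γ' from rfl, hcγ', map_add, map_sum]
        simp only [map_smul]
        rfl
      have heq : -(w γ) = -(w γ') + ∑ α ∈ R.simples, (c α : ℝ) • w α := by
        rw [hwsum]; abel
      have hh : (1:ℝ) = h (-(w γ')) + ∑ α ∈ R.simples, (c α : ℝ) * h (w α) := by
        rw [← hs1 _ hsimple, heq, map_add, map_sum]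
        simp only [map_smul, smul_eq_mul]
      have hterm : ∀ α ∈ R.simples, 0 ≤ (c α : ℝ) * h (w α) := by
        intro α hα
        by_cases hc : c α = 0
        · rw [hc]; simp
        · have hℓα : ℓ α = 0 := by
            by_contra hz
            exact hc (hcsupp α hz)
          have : w α ∈ R.pos := hw.2 α (R.simples_subset hα) hℓα
          have := hp1 _ this
          positivity
      have hsum0 : ∑ α ∈ R.simples, (c α : ℝ) * h (w α) = 0 := by
        have hge := hp1 _ hγ'neg
        have hle : ∑ α ∈ R.simples, (c α : ℝ) * h (w α) ≤ 0 := by linarith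
        exact le_antisymm hle (Finset.sum_nonneg hterm)
      have hczero : ∀ α ∈ R.simples, c α = 0 := by
        intro α hα
        by_contra hc
        have hℓα : ℓ α = 0 := by
          by_contra hz
          exact hc (hcsupp α hz)
        have hwα : w α ∈ R.pos := hw.2 α (R.simples_subset hα) hℓα
        have h1 := hp1 _ hwα
        have hc1 : (1:ℝ) ≤ (c α : ℝ) := by exact_mod_cast Nat.one_le_iff_ne_zero.2 hc
        have hterm0 := (Finset.sum_eq_zero_iff_of_nonneg hterm).mp hsum0 α hα
        nlinarith
      rw [hcγ']
      have : ∑ α ∈ R.simples, (c α : ℝ) • α = 0 :=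
        Finset.sum_eq_zero fun α hα => by rw [hczero α hα]; simp
      rw [this, add_zero]
  refine ⟨main, ?_⟩
  ext γ
  simp only [Set.mem_inter_iff, Set.mem_setOf_eq]
  constructor
  · intro hm
    have hγ : γ ∈ invSet R w := hm.1
    exact ⟨(main γ hγ).1 hm, invSet_subset_gradeOne R ℓ hab hsimp hw hγ⟩
  · rintro ⟨hsimple, hg1⟩
    have hγ : γ ∈ invSet R w :=
      ⟨pos_of_grade_one R ℓ hsimp hg1.1 hg1.2, R.simples_subset hsimple⟩
    exact (main γ hγ).2 hsimple
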